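/- Let f : {-1,1}^n → [-1,1] have degree at most d. Then E[(x_1 + x_2 + ⋯ + x_n) · f(x)] ≤ d, where the expectation is over the uniform measure on {-1,1}^n. Equivalently, the sum of the first-level Fourier coefficients Σ_{i=1}^n f̂({i}) is at most d. -/

import Mathlib

open Finset

/-- The Fourier character χ_S evaluated at a point of the Boolean cube
(coordinates encoded by `Bool`, with `true ↦ 1` and `false ↦ -1`). -/
noncomputable def char {n : ℕ} (S : Finset (Fin n)) (x : Fin n → Bool) : ℝ :=
  ∏ i ∈ S, (if x i then (1 : ℝ) else -1)

/-- The multilinear polynomial with Fourier coefficients `c`, evaluated on the cube. -/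
noncomputable def eval' {n : ℕ} (c : Finset (Fin n) → ℝ) (x : Fin n → Bool) : ℝ :=
  ∑ S : Finset (Fin n), c S * char S x

/-- Flip the i-th coordinate. -/
def flipAt {n : ℕ} (x : Fin n → Bool) (i : Fin n) : Fin n → Bool :=
  Function.update x i (!(x i))

/-- Expectation over the uniform measure on the cube. -/
noncomputable def Ex {n : ℕ} (g : (Fin n → Bool) → ℝ) : ℝ :=
  (∑ x : Fin n → Bool, g x) / 2 ^ n

noncomputable def bval (b : Bool) : ℝ := if b then 1 else -1

namespace FLD
open Complex

variable (D : ℕ)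
noncomputable def E (m : ℕ) : ℂ := Complex.exp ((((m : ℝ) * (Real.pi / (2*D)) : ℝ) : ℂ) * Complex.I)
lemma E_ne_zero (m : ℕ) : E D m ≠ 0 := Complex.exp_ne_zero _
lemma E_mul (m l : ℕ) : E D m * E D l = E D (m + l) := by
  rw [E, E, E, ← Complex.exp_add]; push_cast; ring_nf
lemma E_pow (m r : ℕ) : E D m ^ r = E D (m * r) := by
  rw [E, E, ← Complex.exp_nat_mul]; push_cast; ring_nf
lemma E_two_D (hD : 0 < D) : E D (2 * D) = -1 := by
  have h : ((2 * D : ℕ) : ℝ) * (Real.pi / (2*D)) = Real.pi := by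
    push_cast; field_simp
  rw [E, h, Complex.exp_pi_mul_I]
lemma E_four_D (hD : 0 < D) : E D (4 * D) = 1 := by
  have : (4 * D) = 2 * D + 2 * D := by ring
  rw [this, ← E_mul, E_two_D D hD]; ring
lemma E_eq_one (hD : 0 < D) (m : ℕ) (h : E D m = 1) : (4*D) ∣ m := by
  rw [E, Complex.exp_eq_one_iff] at h
  obtain ⟨q, hq⟩ := h
  have hI : ((((m : ℝ) * (Real.pi / (2*D)) : ℝ)) : ℂ) * Complex.I
      = ((q * (2 * Real.pi) : ℝ) : ℂ) * Complex.I := by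
    push_cast at hq ⊢; linear_combination hq
  have hI2 := mul_right_cancel₀ Complex.I_ne_zero hI
  have hr : (m : ℝ) * (Real.pi / (2*D)) = q * (2 * Real.pi) := by exact_mod_cast hI2
  have hpi : Real.pi ≠ 0 := Real.pi_ne_zero
  have hD' : (D:ℝ) ≠ 0 := by positivity
  have hr2 : ((m : ℝ) - q * (4*D)) * Real.pi = 0 := by
    field_simp at hr
    linear_combination Real.pi * hr
  have hm : (m : ℝ) = q * (4*D) := by
    rcases mul_eq_zero.mp hr2 with h' | h'
    · linarith
    · exact absurd h' hpi
  have hz : (m : ℤ) = q * (4*D) := by exact_mod_cast hm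
  have hq0 : 0 ≤ q := by nlinarith [hz, Int.ofNat_nonneg m]
  refine ⟨q.toNat, ?_⟩
  have : (m : ℤ) = (4*D) * q.toNat := by rw [Int.toNat_of_nonneg hq0]; linarith
  exact_mod_cast this
noncomputable def v (k : ℕ) : ℂ := E D (2 * k + 1)
lemma v_ne_zero (k : ℕ) : v D k ≠ 0 := E_ne_zero D _
lemma v_pow_2D (hD : 0 < D) (k : ℕ) : v D k ^ (2*D) = -1 := by
  rw [v, E_pow]
  have h1 : (2*k+1) * (2*D) = 2*D + (4 * D) * k := by ring
  rw [h1, ← E_mul, E_two_D D hD, ← E_pow, E_four_D D hD, one_pow, mul_one]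
lemma v_ne_one (hD : 0 < D) (k : ℕ) : v D k ≠ 1 := by
  intro h
  have := v_pow_2D D hD k
  rw [h, one_pow] at this
  norm_num at this
lemma v_sub_one_ne (hD : 0 < D) (k : ℕ) : v D k - 1 ≠ 0 :=
  sub_ne_zero.mpr (v_ne_one D hD k)

/-- power sums -/
noncomputable def P (r : ℕ) : ℂ := ∑ k ∈ range (2*D), v D k ^ r

lemma P_eq_zero (hD : 0 < D) (r : ℕ) (h1 : 0 < r) (h2 : r < 4*D) (h3 : r ≠ 2*D) :
    P D r = 0 := by
  have hx1 : E D (2*r) ≠ 1 := by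
    intro h
    obtain ⟨q, hq⟩ := E_eq_one D hD _ h
    have hq2 : q < 2 := by
      by_contra h'
      push_neg at h'
      have : 4*D*2 ≤ 4*D*q := Nat.mul_le_mul_left _ h'
      omega
    interval_cases q <;> omega
  have hterm : ∀ k, v D k ^ r = E D r * (E D (2*r)) ^ k := by
    intro k
    rw [v, E_pow, E_pow]
    rw [E_mul]
    congr 1
    ring
  rw [P]
  simp only [hterm]
  rw [← Finset.mul_sum, geom_sum_eq hx1]
  rw [E_pow]
  have h4 : 2*r*(2*D) = (4*D)*r := by ring
  rw [h4, ← E_pow, E_four_D D hD, one_pow]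
  simp

lemma P_two_D (hD : 0 < D) : P D (2*D) = -(2*D : ℂ) := by
  rw [P]
  have hterm : ∀ k, v D k ^ (2*D) = -1 := v_pow_2D D hD
  simp only [hterm]
  simp

/-- geometric: (∑ j < 2D, v^j) * (v - 1) = -2 -/
lemma geom_v (hD : 0 < D) (k : ℕ) :
    (∑ j ∈ range (2*D), v D k ^ j) * (v D k - 1) = -2 := by
  rw [geom_sum_mul, v_pow_2D D hD]
  ring

noncomputable def Q (t : ℕ) : ℂ := ∑ k ∈ range (2*D), v D k ^ t / (v D k - 1)

lemma Q_succ (hD : 0 < D) (t : ℕ) : Q D (t+1) = Q D t + P D t := by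
  rw [Q, Q, P, ← Finset.sum_add_distrib]
  refine Finset.sum_congr rfl fun k _ => ?_
  have h := v_sub_one_ne D hD k
  field_simp
  ring

lemma v_reflect (hD : 0 < D) (k : ℕ) (hk : k < 2*D) :
    v D (2*D - 1 - k) * v D k = 1 := by
  rw [v, v, E_mul]
  have : 2*(2*D-1-k) + 1 + (2*k+1) = 4*D := by omega
  rw [this, E_four_D D hD]

lemma Q_one (hD : 0 < D) : Q D 1 = (D : ℂ) := by
  have key : Q D 1 + Q D 1 = 2*D := by
    nth_rewrite 2 [Q]
    rw [← Finset.sum_range_reflect (fun k => v D k ^ 1 / (v D k - 1)) (2*D)]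
    rw [Q, ← Finset.sum_add_distrib]
    have hper : ∀ k ∈ range (2*D), v D k ^ 1 / (v D k - 1)
        + v D (2*D-1-k) ^ 1 / (v D (2*D-1-k) - 1) = 1 := by
      intro k hk
      rw [Finset.mem_range] at hk
      have hrefl : v D (2*D-1-k) * v D k = 1 := v_reflect D hD k hk
      have h1 := v_sub_one_ne D hD k
      have h2 := v_sub_one_ne D hD (2*D-1-k)
      have h0 := v_ne_zero D k
      field_simp
      linear_combination hrefl
    rw [Finset.sum_congr rfl hper]
    simp
  linear_combination key / 2


lemma Q_low (hD : 0 < D) : ∀ t, 1 ≤ t → t ≤ 2*D → Q D t = (D : ℂ) := by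
  intro t
  induction t with
  | zero => omega
  | succ m ih =>
    intro h1 h2
    rcases Nat.eq_or_lt_of_le h1 with h | h
    · rw [← h]; exact Q_one D hD
    · have hm1 : 1 ≤ m := by omega
      rw [Q_succ D hD, ih hm1 (by omega), P_eq_zero D hD m (by omega) (by omega) (by omega),
        add_zero]

lemma Q_high (hD : 0 < D) : ∀ t, 2*D + 1 ≤ t → t ≤ 4*D → Q D t = -(D : ℂ) := by
  intro t
  induction t with
  | zero => omega
  | succ m ih =>
    intro h1 h2
    rcases Nat.eq_or_lt_of_le h1 with h | h
    · have hm : m = 2*D := by omega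
      subst hm
      rw [Q_succ D hD, Q_low D hD _ (by omega) (by omega), P_two_D D hD]
      push_cast; ring
    · rw [Q_succ D hD, ih (by omega) (by omega),
        P_eq_zero D hD m (by omega) (by omega) (by omega), add_zero]

noncomputable def S (m : ℕ) : ℂ := ∑ k ∈ range (2*D), v D k ^ m / (v D k - 1) ^ 2

lemma S_eq (hD : 0 < D) (m : ℕ) : (-2 : ℂ) * S D m = ∑ j ∈ range (2*D), Q D (m + j) := by
  rw [S, Finset.mul_sum]
  have hper : ∀ k ∈ range (2*D),
      (-2:ℂ) * (v D k ^ m / (v D k - 1)^2) = ∑ j ∈ range (2*D), v D k ^ (m+j) / (v D k - 1) := by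
    intro k _
    have hg := geom_v D hD k
    have h1 := v_sub_one_ne D hD k
    have : ∑ j ∈ range (2*D), v D k ^ (m+j) / (v D k - 1)
        = (v D k ^ m / (v D k - 1)) * ∑ j ∈ range (2*D), v D k ^ j := by
      rw [Finset.mul_sum]
      refine Finset.sum_congr rfl fun j _ => ?_
      rw [pow_add]; ring
    rw [this]
    have hsum : ∑ j ∈ range (2*D), v D k ^ j = -2 / (v D k - 1) := by
      field_simp
      linear_combination hg
    rw [hsum]
    field_simp
  rw [Finset.sum_congr rfl hper, Finset.sum_comm]
  rfl

lemma S_val (hD : 0 < D) (m : ℕ) (h1 : 1 ≤ m) (h2 : m ≤ 2*D+1) :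
    S D m = ((m : ℂ) - 1 - D) * D := by
  have hS := S_eq D hD m
  have hQ : ∀ j ∈ range (2*D), Q D (m + j) = if m + j ≤ 2*D then (D:ℂ) else -D := by
    intro j hj
    rw [Finset.mem_range] at hj
    split_ifs with h
    · exact Q_low D hD _ (by omega) h
    · exact Q_high D hD _ (by omega) (by omega)
  rw [Finset.sum_congr rfl hQ] at hS
  set p := 2*D + 1 - m with hp
  have hcond : ∀ j, (m + j ≤ 2*D) = (j < p) := by
    intro j; simp only [eq_iff_iff]; omega
  simp only [hcond] at hS
  rw [Finset.range_eq_Ico, ← Finset.sum_Ico_consecutive _ (Nat.zero_le p) (by omega : p ≤ 2*D)]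
    at hS
  rw [Finset.sum_ite_of_true, Finset.sum_ite_of_false] at hS
  · rw [Finset.sum_const, Finset.sum_const, Nat.card_Ico, Nat.card_Ico] at hS
    have hp1 : (p : ℂ) = 2*(D:ℂ) + 1 - m := by
      rw [hp]; push_cast [Nat.cast_sub (by omega : m ≤ 2*D+1)]; ring
    have hp2 : ((2*D - p : ℕ) : ℂ) = (m : ℂ) - 1 := by
      push_cast [Nat.cast_sub (by omega : p ≤ 2*D)]
      rw [hp1]; ring
    rw [nsmul_eq_mul, nsmul_eq_mul, Nat.sub_zero, hp2, hp1] at hS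
    linear_combination (-1/2 : ℂ) * hS
  · intro i hi; rw [Finset.mem_Ico] at hi; omega
  · intro i hi; rw [Finset.mem_Ico] at hi; omega

noncomputable def ang (k : ℕ) : ℝ := ((2*k+1 : ℕ) : ℝ) * (Real.pi / (2*D))

lemma v_eq (k : ℕ) : v D k = Complex.exp ((ang D k : ℂ) * Complex.I) := rfl

lemma v_cos (k : ℕ) : v D k + (v D k)⁻¹ = 2 * (Real.cos (ang D k) : ℂ) := by
  rw [v_eq, ← Complex.exp_neg, ← neg_mul, ← Complex.ofReal_neg, Complex.exp_mul_I,
    Complex.exp_mul_I, ← Complex.ofReal_cos, ← Complex.ofReal_sin, ← Complex.ofReal_cos,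
    ← Complex.ofReal_sin, Real.cos_neg, Real.sin_neg]
  push_cast
  ring

lemma v_sin (k : ℕ) : v D k - (v D k)⁻¹ = 2 * Complex.I * (Real.sin (ang D k) : ℂ) := by
  rw [v_eq, ← Complex.exp_neg, ← neg_mul, ← Complex.ofReal_neg, Complex.exp_mul_I,
    Complex.exp_mul_I, ← Complex.ofReal_cos, ← Complex.ofReal_sin, ← Complex.ofReal_cos,
    ← Complex.ofReal_sin, Real.cos_neg, Real.sin_neg]
  push_cast
  ring

lemma sq_v_sub_one (hD : 0 < D) (k : ℕ) :
    (v D k - 1)^2 = v D k * (2 * (Real.cos (ang D k) : ℂ) - 2) := by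
  have h := v_cos D k
  have h0 := v_ne_zero D k
  field_simp at h
  linear_combination h

lemma cos_ne_one (hD : 0 < D) (k : ℕ) : Real.cos (ang D k) ≠ 1 := by
  intro h
  have hsq := sq_v_sub_one D hD k
  rw [h] at hsq
  have h0 : (v D k - 1)^2 = 0 := by rw [hsq]; push_cast; ring
  exact v_sub_one_ne D hD k (pow_eq_zero_iff (two_ne_zero) |>.mp h0)

noncomputable def w (k : ℕ) : ℝ := 2 / (1 - Real.cos (ang D k))

lemma w_pos (hD : 0 < D) (k : ℕ) : 0 < w D k := by
  have h1 : Real.cos (ang D k) ≤ 1 := Real.cos_le_one _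
  have h2 := cos_ne_one D hD k
  have : 0 < 1 - Real.cos (ang D k) := by
    rcases lt_or_eq_of_le h1 with h | h
    · linarith
    · exact absurd h h2
  rw [w]; positivity

lemma w_complex_aux (r : ℝ) (z : ℂ) (hr : (z - 1)^2 = z * (2*(r:ℂ) - 2))
    (hrne : (1:ℝ) - r ≠ 0) : ((2 / (1 - r) : ℝ) : ℂ) * (z - 1)^2 = -4 * z := by
  have hc : ((1 - r : ℝ) : ℂ) ≠ 0 := Complex.ofReal_ne_zero.mpr hrne
  push_cast at hc ⊢
  rw [hr]
  field_simp
  ring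

lemma w_complex (hD : 0 < D) (k : ℕ) :
    ((w D k : ℝ) : ℂ) * (v D k - 1)^2 = -4 * v D k :=
  w_complex_aux _ _ (sq_v_sub_one D hD k)
    (sub_ne_zero.mpr (Ne.symm (cos_ne_one D hD k)))

lemma v_pow_D (hD : 0 < D) (k : ℕ) : v D k ^ D = Complex.I * (-1)^k := by
  rw [v, E_pow]
  have harg : (((((2*k+1) * D : ℕ) : ℝ) * (Real.pi / (2*D)) : ℝ) : ℂ)
      = (((2*k+1 : ℕ) : ℝ) * (Real.pi / 2) : ℝ) := by
    have hD' : (D:ℝ) ≠ 0 := by positivity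
    have h3 : Real.pi / (2*D) * D = Real.pi / 2 := by
      field_simp
    have hreal : ((((2*k+1) * D : ℕ) : ℝ) * (Real.pi / (2*D)) : ℝ)
        = (((2*k+1 : ℕ) : ℝ) * (Real.pi / 2) : ℝ) := by
      push_cast
      calc ((2*(k:ℝ)+1) * D) * (Real.pi / (2*D)) = (2*(k:ℝ)+1) * (Real.pi / (2*D) * D) := by ring
        _ = (2*(k:ℝ)+1) * (Real.pi / 2) := by rw [h3]
    exact_mod_cast hreal
  rw [E, harg]
  have h2 : ((((2*k+1 : ℕ) : ℝ) * (Real.pi / 2) : ℝ) : ℂ) * Complex.I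
      = ((2*k+1 : ℕ) : ℂ) * ((((Real.pi / 2 : ℝ)) : ℂ) * Complex.I) := by push_cast; ring
  rw [h2, Complex.exp_nat_mul, Complex.exp_mul_I]
  rw [← Complex.ofReal_cos, ← Complex.ofReal_sin, Real.cos_pi_div_two, Real.sin_pi_div_two]
  push_cast
  simp only [zero_add, one_mul]
  rw [pow_succ, pow_mul, Complex.I_sq]
  ring

lemma alt_sum (j : ℕ) :
    ∑ r ∈ range (j+1), (-1:ℂ)^(j-r) * (j.choose r) = if j = 0 then 1 else 0 := by
  have h := add_pow (1:ℂ) (-1) j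
  simp only [one_pow, one_mul, add_neg_cancel] at h
  rw [zero_pow_eq] at h
  rw [← h]

lemma alt_sum_r (j : ℕ) :
    ∑ r ∈ range (j+1), (-1:ℂ)^(j-r) * (j.choose r) * r = if j = 1 then 1 else 0 := by
  cases j with
  | zero => simp
  | succ t =>
    rw [Finset.sum_range_succ']
    simp only [Nat.cast_zero, mul_zero, add_zero]
    have hterm : ∀ i, (-1:ℂ)^(t+1-(i+1)) * (((t+1).choose (i+1) : ℕ) : ℂ) * (((i+1) : ℕ) : ℂ)
        = (t+1) * ((-1:ℂ)^(t-i) * (t.choose i)) := by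
      intro i
      have hch : ((t+1).choose (i+1)) * (i+1) = (t+1) * (t.choose i) := by
        rw [← Nat.add_one_mul_choose_eq]
      have hchC : (((t+1).choose (i+1) : ℕ) : ℂ) * (((i+1) : ℕ) : ℂ)
          = ((t:ℂ)+1) * ((t.choose i : ℕ) : ℂ) := by exact_mod_cast hch
      have he : t+1-(i+1) = t-i := by omega
      rw [he]
      linear_combination (-1:ℂ)^(t-i) * hchC
    rw [Finset.sum_congr rfl (fun i _ => hterm i), ← Finset.mul_sum, alt_sum]
    rcases Nat.eq_zero_or_pos t with h | h
    · subst h; simp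
    · rw [if_neg (by omega), if_neg (by omega)]
      ring

lemma V_sum (j : ℕ) :
    ∑ r ∈ range (j+1), (-1:ℂ)^(j-r) * (j.choose r) * (2*r - (j:ℂ))
      = if j = 1 then 2 else 0 := by
  have h1 := alt_sum j
  have h2 := alt_sum_r j
  have hsplit : ∑ r ∈ range (j+1), (-1:ℂ)^(j-r) * (j.choose r) * (2*r - (j:ℂ))
      = 2 * (∑ r ∈ range (j+1), (-1:ℂ)^(j-r) * (j.choose r) * r)
        - (j:ℂ) * (∑ r ∈ range (j+1), (-1:ℂ)^(j-r) * (j.choose r)) := by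
    rw [Finset.mul_sum, Finset.mul_sum, ← Finset.sum_sub_distrib]
    refine Finset.sum_congr rfl fun r hr => ?_
    ring
  rw [hsplit, h1, h2]
  rcases Nat.eq_zero_or_pos j with h | h
  · subst h; simp
  · rcases Nat.eq_or_lt_of_le h with h' | h'
    · rw [← h']; norm_num
    · rw [if_neg (by omega), if_neg (by omega), if_neg (by omega)]
      ring

noncomputable def Cw (k : ℕ) : ℝ := ((-1)^k * w D k) / (4*D)

lemma K1 (hD : 0 < D) (j : ℕ) (hj : j ≤ D) :
    ∑ k ∈ range (2*D), Cw D k * (Real.sin (ang D k))^j = if j = 1 then 1 else 0 := by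
  have hDne : ((D:ℕ) : ℂ) ≠ 0 := Nat.cast_ne_zero.mpr (by omega)
  have h2I : (2*Complex.I : ℂ) ≠ 0 := by simp [Complex.I_ne_zero]
  have h2Ij : ((2*Complex.I : ℂ))^j ≠ 0 := pow_ne_zero _ h2I
  -- step 1 : pointwise expansion
  have step1 : ∀ k ∈ range (2*D),
      ((Cw D k : ℝ) : ℂ) * ((Real.sin (ang D k) : ℝ) : ℂ)^j
      = ∑ r ∈ range (j+1), ((-1:ℂ)^(j-r) * (j.choose r) * (Complex.I / ((2*Complex.I)^j * D)))
          * (v D k ^ (D+1+2*r-j) / (v D k - 1)^2) := by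
    intro k _
    have hv0 := v_ne_zero D k
    have hv1 := v_sub_one_ne D hD k
    have hw' : ((w D k : ℝ) : ℂ) = -4 * v D k / (v D k - 1)^2 := by
      rw [eq_div_iff (pow_ne_zero 2 hv1)]; exact w_complex D hD k
    have hsin : ((Real.sin (ang D k) : ℝ) : ℂ) = (v D k - (v D k)⁻¹) / (2*Complex.I) := by
      rw [eq_div_iff h2I]; linear_combination (v_sin D k).symm
    have hCw : ((Cw D k : ℝ) : ℂ) = ((-1:ℂ)^k * ((w D k : ℝ):ℂ)) / (4*(D:ℂ)) := by
      rw [Cw]; push_cast; ring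
    have hsgn : ((-1:ℂ)^k) = -Complex.I * v D k ^ D := by
      rw [v_pow_D D hD k, show -Complex.I*(Complex.I*(-1:ℂ)^k) = -(Complex.I^2)*(-1)^k from by ring,
        Complex.I_sq]
      ring
    have hbin : (v D k - (v D k)⁻¹)^j
        = ∑ r ∈ range (j+1), v D k ^ r * (-(v D k)⁻¹)^(j-r) * (j.choose r) := by
      rw [sub_eq_add_neg, add_pow]
    rw [hCw, hsin, hsgn, hw', div_pow, hbin, Finset.sum_div, Finset.mul_sum]
    refine Finset.sum_congr rfl fun r hr => ?_
    rw [Finset.mem_range] at hr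
    have hr' : r ≤ j := by omega
    have hexp : (D+1+2*r-j) + (j-r) = 1+(D+r) := by omega
    have her : v D k ^ (D+1+2*r-j) = v D k * v D k ^ D * v D k ^ r / v D k ^ (j-r) := by
      rw [eq_div_iff (pow_ne_zero _ hv0), ← pow_add, hexp, pow_add, pow_add, pow_one]
      ring
    rw [her, neg_pow, inv_pow]
    have hvjr : (v D k ^ (j-r)) ≠ 0 := pow_ne_zero _ hv0
    field_simp
  -- complexified sum
  have hC : ((∑ k ∈ range (2*D), Cw D k * (Real.sin (ang D k))^j : ℝ) : ℂ)
      = ∑ r ∈ range (j+1), ((-1:ℂ)^(j-r) * (j.choose r) * (Complex.I / ((2*Complex.I)^j * D)))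
          * S D (D+1+2*r-j) := by
    push_cast [-Complex.ofReal_sin]
    rw [Finset.sum_congr rfl step1, Finset.sum_comm]
    refine Finset.sum_congr rfl fun r _ => ?_
    rw [S, Finset.mul_sum]
  have hfinal : ∑ r ∈ range (j+1), ((-1:ℂ)^(j-r) * (j.choose r) * (Complex.I / ((2*Complex.I)^j * D)))
          * S D (D+1+2*r-j)
      = (Complex.I / (2*Complex.I)^j) * (if j = 1 then 2 else 0) := by
    rw [← V_sum j, Finset.mul_sum]
    refine Finset.sum_congr rfl fun r hr => ?_
    rw [Finset.mem_range] at hr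
    rw [S_val D hD _ (by omega) (by omega)]
    have hcast : ((D+1+2*r-j : ℕ) : ℂ) = (D:ℂ)+1+2*r-j := by
      push_cast [Nat.cast_sub (by omega : j ≤ D+1+2*r)]
      ring
    rw [hcast]
    field_simp
    ring
  rw [hfinal] at hC
  have hval : (Complex.I / (2*Complex.I)^j) * (if j = 1 then 2 else 0)
      = ((if j = 1 then (1:ℝ) else 0 : ℝ) : ℂ) := by
    split_ifs with h
    · subst h
      rw [pow_one]
      push_cast
      field_simp
    · push_cast
      ring
  rw [hval] at hC
  exact_mod_cast hC

lemma K2 (hD : 0 < D) : ∑ k ∈ range (2*D), |Cw D k| = (D : ℝ) := by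
  have habs : ∀ k ∈ range (2*D), |Cw D k| = w D k / (4*D) := by
    intro k _
    rw [Cw, abs_div, abs_of_pos (by positivity : (0:ℝ) < 4*(D:ℝ)), abs_mul]
    have h1 : |((-1:ℝ))^k| = 1 := by
      rw [_root_.abs_pow]
      simp
    rw [h1, one_mul, abs_of_pos (w_pos D hD k)]
  rw [Finset.sum_congr rfl habs, ← Finset.sum_div]
  have hsum : ∑ k ∈ range (2*D), w D k = 4*(D:ℝ)^2 := by
    have hCsum : ((∑ k ∈ range (2*D), w D k : ℝ) : ℂ) = ((4*(D:ℝ)^2 : ℝ) : ℂ) := by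
      push_cast
      have hper : ∀ k ∈ range (2*D), ((w D k : ℝ) : ℂ) = -4 * (v D k ^ 1 / (v D k - 1)^2) := by
        intro k _
        have h1 := v_sub_one_ne D hD k
        have hw := w_complex D hD k
        field_simp
        linear_combination hw
      rw [Finset.sum_congr rfl hper, ← Finset.mul_sum]
      have : ∑ k ∈ range (2*D), v D k ^ 1 / (v D k - 1)^2 = S D 1 := rfl
      rw [this, S_val D hD 1 (by omega) (by omega)]
      push_cast
      ring
    exact_mod_cast hCsum
  rw [hsum]
  field_simp

/-- Bernstein-type bound on the linear coefficient. -/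
lemma coeff_one_le (d : ℕ) (hd : 0 < d) (a : ℕ → ℝ)
    (hb : ∀ t : ℝ, |t| ≤ 1 → |∑ j ∈ range (d+1), a j * t^j| ≤ 1) :
    a 1 ≤ (d : ℝ) := by
  have hswap : ∑ k ∈ range (2*d), Cw d k * (∑ j ∈ range (d+1), a j * (Real.sin (ang d k))^j)
      = ∑ j ∈ range (d+1), a j * (∑ k ∈ range (2*d), Cw d k * (Real.sin (ang d k))^j) := by
    simp_rw [Finset.mul_sum]
    rw [Finset.sum_comm]
    refine Finset.sum_congr rfl fun j _ => ?_
    refine Finset.sum_congr rfl fun k _ => ?_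
    ring
  have hk1 : ∀ j ∈ range (d+1),
      a j * (∑ k ∈ range (2*d), Cw d k * (Real.sin (ang d k))^j)
      = if j = 1 then a j else 0 := by
    intro j hj
    rw [Finset.mem_range] at hj
    rw [K1 d hd j (by omega)]
    split_ifs <;> ring
  have ha1 : a 1 = ∑ k ∈ range (2*d), Cw d k * (∑ j ∈ range (d+1), a j * (Real.sin (ang d k))^j) := by
    rw [hswap, Finset.sum_congr rfl hk1, Finset.sum_ite_eq' (range (d+1)) 1 a,
      if_pos (by rw [Finset.mem_range]; omega)]
  rw [ha1]
  calc ∑ k ∈ range (2*d), Cw d k * (∑ j ∈ range (d+1), a j * (Real.sin (ang d k))^j)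
      ≤ ∑ k ∈ range (2*d), |Cw d k| := by
        refine Finset.sum_le_sum fun k _ => ?_
        have hsb : |∑ j ∈ range (d+1), a j * (Real.sin (ang d k))^j| ≤ 1 := by
          refine hb _ (abs_le.mpr ⟨Real.neg_one_le_sin _, Real.sin_le_one _⟩)
        calc Cw d k * (∑ j ∈ range (d+1), a j * (Real.sin (ang d k))^j)
            ≤ |Cw d k * (∑ j ∈ range (d+1), a j * (Real.sin (ang d k))^j)| := le_abs_self _
          _ = |Cw d k| * |∑ j ∈ range (d+1), a j * (Real.sin (ang d k))^j| := abs_mul _ _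
          _ ≤ |Cw d k| * 1 := by
              exact mul_le_mul_of_nonneg_left hsb (abs_nonneg _)
          _ = |Cw d k| := mul_one _
    _ = d := K2 d hd

end FLD

open FLD Complex


section Cube

variable {n : ℕ}

lemma cube_sum_prod (g : Fin n → Bool → ℝ) :
    ∑ x : Fin n → Bool, ∏ i, g i (x i) = ∏ i, (g i true + g i false) := by
  rw [← Fintype.prod_sum]
  refine Finset.prod_congr rfl fun i _ => ?_
  rw [Fintype.sum_bool]

lemma cube_sum_prod' (g : Fin n → Bool → ℝ) (f : (Fin n → Bool) → ℝ)
    (hf : ∀ x, f x = ∏ i, g i (x i)) :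
    ∑ x : Fin n → Bool, f x = ∏ i, (g i true + g i false) := by
  rw [Finset.sum_congr rfl (fun x _ => hf x)]
  exact cube_sum_prod g

lemma char_eq_prod (S : Finset (Fin n)) (x : Fin n → Bool) :
    char S x = ∏ j, (if j ∈ S then bval (x j) else 1) := by
  rw [Fintype.prod_ite_mem, char]
  rfl

lemma orth (S : Finset (Fin n)) (i : Fin n) :
    ∑ x : Fin n → Bool, char S x * bval (x i)
      = if S = {i} then (2:ℝ)^n else 0 := by
  have hpt : ∀ x : Fin n → Bool, char S x * bval (x i)
      = ∏ j, ((if j ∈ S then bval (x j) else 1) * (if j = i then bval (x j) else 1)) := by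
    intro x
    rw [Finset.prod_mul_distrib, ← char_eq_prod, Fintype.prod_ite_eq']
  have hcs := cube_sum_prod'
    (fun j b => (if j ∈ S then bval b else 1) * (if j = i then bval b else 1))
    (fun x => ∏ j, ((if j ∈ S then bval (x j) else 1) * (if j = i then bval (x j) else 1)))
    (fun x => rfl)
  rw [Finset.sum_congr rfl (fun x _ => hpt x), hcs]
  have hfac : ∀ j : Fin n,
      ((if j ∈ S then bval true else 1) * (if j = i then bval true else 1)
        + (if j ∈ S then bval false else 1) * (if j = i then bval false else 1))
      = if (j ∈ S) = (j = i) then 2 else 0 := by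
    intro j
    by_cases h2 : j = i
    · subst h2
      by_cases h1 : j ∈ S <;> simp [h1, bval, eq_iff_iff] <;> norm_num
    · by_cases h1 : j ∈ S <;> simp [h1, h2, bval, eq_iff_iff] <;> norm_num
  rw [Finset.prod_congr rfl (fun j _ => hfac j)]
  split_ifs with hS
  · subst hS
    have : ∀ j : Fin n, (if (j ∈ ({i} : Finset (Fin n))) = (j = i) then (2:ℝ) else 0) = 2 := by
      intro j
      rw [if_pos]
      simp [Finset.mem_singleton]
    rw [Finset.prod_congr rfl (fun j _ => this j), Finset.prod_const]
    simp
  · -- find a witness coordinate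
    have hex : ∃ j : Fin n, ¬ ((j ∈ S) = (j = i)) := by
      by_contra hcon
      push_neg at hcon
      apply hS
      ext j
      rw [Finset.mem_singleton]
      rw [hcon j]
    obtain ⟨j0, hj0⟩ := hex
    exact Finset.prod_eq_zero (Finset.mem_univ j0) (by rw [if_neg hj0])

lemma Ex_eq (c : Finset (Fin n) → ℝ) :
    Ex (fun x => (∑ i, bval (x i)) * eval' c x) = ∑ i, c {i} := by
  rw [Ex]
  have hsum : ∑ x : Fin n → Bool, (∑ i, bval (x i)) * eval' c x
      = ∑ i : Fin n, ∑ S : Finset (Fin n), c S * (∑ x : Fin n → Bool, char S x * bval (x i)) := by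
    simp_rw [eval', Finset.sum_mul, Finset.mul_sum]
    rw [Finset.sum_comm]
    refine Finset.sum_congr rfl fun i _ => ?_
    rw [Finset.sum_comm]
    refine Finset.sum_congr rfl fun S _ => ?_
    refine Finset.sum_congr rfl fun x _ => ?_
    ring
  rw [hsum]
  have hin : ∀ i : Fin n, ∑ S : Finset (Fin n), c S * (∑ x : Fin n → Bool, char S x * bval (x i))
      = c {i} * 2^n := by
    intro i
    have : ∀ S : Finset (Fin n), c S * (∑ x : Fin n → Bool, char S x * bval (x i))
        = if S = {i} then c S * 2^n else 0 := by
      intro S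
      rw [orth S i]
      split_ifs <;> ring
    rw [Finset.sum_congr rfl (fun S _ => this S),
      Finset.sum_ite_eq' Finset.univ ({i} : Finset (Fin n)) (fun S => c S * 2^n),
      if_pos (Finset.mem_univ _)]
  rw [Finset.sum_congr rfl (fun i _ => hin i), ← Finset.sum_mul]
  have h2 : ((2:ℝ)^n) ≠ 0 := by positivity
  field_simp

lemma bias_bound (c : Finset (Fin n) → ℝ) (hbd : ∀ x, |eval' c x| ≤ 1) :
    ∀ ρ : ℝ, |ρ| ≤ 1 → |∑ S : Finset (Fin n), c S * ρ^(S.card)| ≤ 1 := by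
  intro ρ hρ
  set μ : (Fin n → Bool) → ℝ := fun x => ∏ i, ((1 + bval (x i) * ρ)/2) with hμ
  have hρ' := abs_le.mp hρ
  have hμ0 : ∀ x, 0 ≤ μ x := by
    intro x
    refine Finset.prod_nonneg fun i _ => ?_
    rcases Bool.eq_false_or_eq_true (x i) with h | h <;>
      simp [h, bval] <;> linarith [hρ'.1, hρ'.2]
  have hμ1 : ∑ x : Fin n → Bool, μ x = 1 := by
    have hcs := cube_sum_prod' (fun (_ : Fin n) b => (1 + bval b * ρ)/2)
      (fun x => ∏ i, (1 + bval (x i) * ρ)/2) (fun x => rfl)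
    rw [hμ, hcs]
    have : ∀ i : Fin n, ((1 + bval true * ρ)/2 + (1 + bval false * ρ)/2) = 1 := by
      intro i
      simp [bval]
      ring
    rw [Finset.prod_congr rfl (fun i _ => this i), Finset.prod_const_one]
  have hμS : ∀ S : Finset (Fin n), ∑ x : Fin n → Bool, μ x * char S x = ρ^(S.card) := by
    intro S
    have hpt : ∀ x : Fin n → Bool, μ x * char S x
        = ∏ j, (((1 + bval (x j) * ρ)/2) * (if j ∈ S then bval (x j) else 1)) := by
      intro x
      rw [Finset.prod_mul_distrib, ← char_eq_prod]
    have hcs := cube_sum_prod'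
      (fun j b => ((1 + bval b * ρ)/2) * (if j ∈ S then bval b else 1))
      (fun x => ∏ j, (((1 + bval (x j) * ρ)/2) * (if j ∈ S then bval (x j) else 1)))
      (fun x => rfl)
    rw [Finset.sum_congr rfl (fun x _ => hpt x), hcs]
    have hfac : ∀ j : Fin n,
        (((1 + bval true * ρ)/2) * (if j ∈ S then bval true else 1)
          + ((1 + bval false * ρ)/2) * (if j ∈ S then bval false else 1))
        = if j ∈ S then ρ else 1 := by
      intro j
      by_cases h : j ∈ S <;> simp [h, bval] <;> ring
    rw [Finset.prod_congr rfl (fun j _ => hfac j), Fintype.prod_ite_mem, Finset.prod_const]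
  have hrepr : ∑ S : Finset (Fin n), c S * ρ^(S.card)
      = ∑ x : Fin n → Bool, μ x * eval' c x := by
    simp_rw [eval', Finset.mul_sum]
    rw [Finset.sum_comm]
    refine Finset.sum_congr rfl fun S _ => ?_
    rw [← hμS S, Finset.mul_sum]
    refine Finset.sum_congr rfl fun x _ => ?_
    ring
  rw [hrepr]
  calc |∑ x : Fin n → Bool, μ x * eval' c x|
      ≤ ∑ x : Fin n → Bool, |μ x * eval' c x| := Finset.abs_sum_le_sum_abs _ _
    _ ≤ ∑ x : Fin n → Bool, μ x := by
        refine Finset.sum_le_sum fun x _ => ?_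
        rw [abs_mul, _root_.abs_of_nonneg (hμ0 x)]
        calc μ x * |eval' c x| ≤ μ x * 1 :=
              mul_le_mul_of_nonneg_left (hbd x) (hμ0 x)
          _ = μ x := mul_one _
    _ = 1 := hμ1

end Cube

theorem first_level_sum_le_degree (n d : ℕ) (c : Finset (Fin n) → ℝ)
    (hdeg : ∀ S, c S ≠ 0 → S.card ≤ d)
    (hbd : ∀ x, |eval' c x| ≤ 1) :
    Ex (fun x => (∑ i, bval (x i)) * eval' c x) ≤ (d : ℝ) := by
  rw [Ex_eq c]
  rcases Nat.eq_zero_or_pos d with hd0 | hd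
  · subst hd0
    have : ∀ i : Fin n, c {i} = 0 := by
      intro i
      by_contra hne
      have := hdeg _ hne
      simp at this
    rw [Finset.sum_congr rfl (fun i _ => this i)]
    simp
  · -- degree at least one
    set a : ℕ → ℝ := fun j => ∑ S ∈ Finset.univ.filter (fun S : Finset (Fin n) => S.card = j), c S
      with ha
    have hcard : ∀ S : Finset (Fin n), S.card ≤ n := by
      intro S
      calc S.card ≤ (Finset.univ : Finset (Fin n)).card := Finset.card_le_card (Finset.subset_univ S)
        _ = n := by simp
    have hzero_d : ∀ j, d < j → a j = 0 := by
      intro j hj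
      rw [ha]
      refine Finset.sum_eq_zero fun S hS => ?_
      rw [Finset.mem_filter] at hS
      by_contra hne
      have := hdeg _ hne
      omega
    have hzero_n : ∀ j, n < j → a j = 0 := by
      intro j hj
      rw [ha]
      refine Finset.sum_eq_zero fun S hS => ?_
      rw [Finset.mem_filter] at hS
      have := hcard S
      omega
    have hpoly : ∀ ρ : ℝ, ∑ S : Finset (Fin n), c S * ρ^(S.card)
        = ∑ j ∈ range (d+1), a j * ρ^j := by
      intro ρ
      have hmap : ∀ S ∈ (Finset.univ : Finset (Finset (Fin n))), S.card ∈ range (n+1) := by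
        intro S _
        rw [Finset.mem_range]
        exact Nat.lt_succ_of_le (hcard S)
      have hfib := Finset.sum_fiberwise_of_maps_to hmap (fun S => c S * ρ^(S.card))
      have hstep : ∀ j ∈ range (n+1),
          ∑ S ∈ Finset.univ.filter (fun S : Finset (Fin n) => S.card = j), c S * ρ^(S.card)
          = a j * ρ^j := by
        intro j _
        rw [ha, Finset.sum_mul]
        refine Finset.sum_congr rfl fun S hS => ?_
        rw [Finset.mem_filter] at hS
        rw [hS.2]
      rw [← hfib, Finset.sum_congr rfl hstep]
      -- now change range (n+1) to range (d+1)
      rcases le_total (n+1) (d+1) with h | h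
      · refine Finset.sum_subset (Finset.range_subset_range.mpr h) fun j hj hnj => ?_
        rw [Finset.mem_range] at hj
        rw [Finset.mem_range] at hnj
        rw [hzero_n j (by omega), zero_mul]
      · refine (Finset.sum_subset (Finset.range_subset_range.mpr h) fun j hj hnj => ?_).symm
        rw [Finset.mem_range] at hj
        rw [Finset.mem_range] at hnj
        rw [hzero_d j (by omega), zero_mul]
    have hb : ∀ t : ℝ, |t| ≤ 1 → |∑ j ∈ range (d+1), a j * t^j| ≤ 1 := by
      intro t ht
      rw [← hpoly t]
      exact bias_bound c hbd t ht
    have hkey := coeff_one_le d hd a hb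
    have ha1 : a 1 = ∑ i : Fin n, c {i} := by
      show (∑ S ∈ Finset.univ.filter (fun S : Finset (Fin n) => S.card = 1), c S)
        = ∑ i : Fin n, c {i}
      have himg : Finset.univ.filter (fun S : Finset (Fin n) => S.card = 1)
          = Finset.univ.image (fun i : Fin n => ({i} : Finset (Fin n))) := by
        ext S
        simp [Finset.card_eq_one, eq_comm]
      rw [himg, Finset.sum_image (fun i _ j _ h => Finset.singleton_injective h)]
    rw [← ha1]
    exact hkey
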